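/- arXiv:2410.22123 — 2 statements merged into one kernel-verified Lean document; each statement's English description precedes it below -/
import Mathlib

section
/- Let D and D* be atomless Borel probability measures on ℝ with d_K(D, D*) ≥ ε for some 0 < ε < 1. Define buckets B_{i,j} = (q_{(i-1)2^{-j}}, q_{i·2^{-j}}] using the quantile function q of D*. Then there exist j ∈ [⌈lg(1/ε)⌉ + 2] and i ∈ [2^j] such that |D*(B_{i,j}) - D(B_{i,j})| ≥ max(ε/j², ε/(lg(1/ε)+3))/10. -/
open MeasureTheory Set Filter Topology

/-- The (generalized inverse) quantile function `q_x = sup{y : D*((-∞,y]) ≤ x}` of a measure,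
valued in `EReal`, with the special cases `q₀ = -∞` and `q₁ = +∞`. -/
noncomputable def quant (μ : Measure ℝ) (x : ℝ) : EReal :=
  if x = 0 then ⊥ else if x = 1 then ⊤ else
    sSup {z : EReal | ∃ y : ℝ, z = (y : EReal) ∧ (μ (Set.Iic y)).toReal ≤ x}

noncomputable def cdfR (μ : Measure ℝ) (y : ℝ) : ℝ := (μ (Set.Iic y)).toReal

noncomputable def qreal (μ : Measure ℝ) (x : ℝ) : ℝ := sSup {y : ℝ | cdfR μ y ≤ x}

section basic
variable (μ : Measure ℝ) [IsProbabilityMeasure μ]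

lemma cdfR_mono : Monotone (cdfR μ) := fun a b hab =>
  ENNReal.toReal_mono (measure_ne_top μ _) (measure_mono (Iic_subset_Iic.2 hab))

lemma cdfR_nonneg (y : ℝ) : 0 ≤ cdfR μ y := ENNReal.toReal_nonneg

lemma cdfR_le_one (y : ℝ) : cdfR μ y ≤ 1 := by
  have := measure_mono (μ := μ) (subset_univ (Iic y))
  have h2 : (μ (Iic y)).toReal ≤ (μ univ).toReal :=
    ENNReal.toReal_mono (measure_ne_top μ _) this
  simpa [cdfR, measure_univ] using h2

lemma exists_cdfR_le {x : ℝ} (hx : 0 < x) : ∃ y, cdfR μ y ≤ x := by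
  have h : Tendsto (fun n : ℕ => μ (Iic (-(n:ℝ)))) atTop (𝓝 (μ (⋂ n : ℕ, Iic (-(n:ℝ))))) := by
    exact tendsto_measure_iInter_atTop (fun n => (measurableSet_Iic).nullMeasurableSet)
      (fun a b hab => Iic_subset_Iic.2 (by have : (a:ℝ) ≤ b := Nat.cast_le.2 hab; linarith))
      ⟨0, measure_ne_top μ _⟩
  have hempty : (⋂ n : ℕ, Iic (-(n:ℝ))) = ∅ := by
    ext z
    simp only [mem_iInter, mem_Iic, mem_empty_iff_false, iff_false, not_forall]
    obtain ⟨n, hn⟩ := exists_nat_gt (-z)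
    exact ⟨n, by push_neg; linarith⟩
  rw [hempty, measure_empty] at h
  have h2 : Tendsto (fun n : ℕ => cdfR μ (-(n:ℝ))) atTop (𝓝 0) := by
    have := (ENNReal.tendsto_toReal (by simp)).comp h
    simpa [cdfR, Function.comp_def] using this
  have := (h2.eventually (eventually_lt_nhds hx)).exists
  obtain ⟨n, hn⟩ := this
  exact ⟨-(n:ℝ), hn.le⟩

lemma exists_lt_cdfR {x : ℝ} (hx : x < 1) : ∃ y, x < cdfR μ y := by
  have h : Tendsto (fun y : ℝ => μ (Iic y)) atTop (𝓝 (μ univ)) := tendsto_measure_Iic_atTop μ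
  rw [measure_univ] at h
  have h2 : Tendsto (cdfR μ) atTop (𝓝 1) := by
    have := (ENNReal.tendsto_toReal (by simp)).comp h
    exact (by simpa [Function.comp_def] using this : Tendsto (fun y => (μ (Iic y)).toReal) atTop (𝓝 1))
  exact (h2.eventually (eventually_gt_nhds hx)).exists

lemma qset_nonempty {x : ℝ} (hx : 0 < x) : {y : ℝ | cdfR μ y ≤ x}.Nonempty :=
  exists_cdfR_le μ hx

lemma qset_bddAbove {x : ℝ} (hx : x < 1) : BddAbove {y : ℝ | cdfR μ y ≤ x} := by
  obtain ⟨y₀, hy₀⟩ := exists_lt_cdfR μ hx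
  refine ⟨y₀, fun y hy => ?_⟩
  by_contra h
  push_neg at h
  have h2 : cdfR μ y₀ ≤ cdfR μ y := cdfR_mono μ h.le
  have : cdfR μ y ≤ x := hy
  linarith

lemma le_cdfR_qreal {x : ℝ} (hx0 : 0 < x) (hx1 : x < 1) : x ≤ cdfR μ (qreal μ x) := by
  set Q := qreal μ x with hQ
  have key : ∀ n : ℕ, x ≤ cdfR μ (Q + 1/(n+1)) := by
    intro n
    have hlt : Q < Q + 1/(n+1) := lt_add_of_pos_right _ (by positivity)
    by_contra h
    push_neg at h
    have : Q + 1/(n+1) ≤ Q := le_csSup (qset_bddAbove μ hx1) h.le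
    linarith
  have hmono : Antitone (fun n : ℕ => Iic (Q + 1/(n+1))) := by
    intro a b hab
    apply Iic_subset_Iic.2
    have : (1:ℝ)/(b+1) ≤ 1/(a+1) := by
      apply one_div_le_one_div_of_le (by positivity)
      have : (a:ℝ) ≤ b := Nat.cast_le.2 hab
      linarith
    linarith
  have hInter : (⋂ n : ℕ, Iic (Q + 1/(n+1))) = Iic Q := by
    ext z
    simp only [mem_iInter, mem_Iic]
    constructor
    · intro h
      by_contra hz
      push_neg at hz
      obtain ⟨n, hn⟩ := exists_nat_gt (1/(z - Q))
      have hpos : 0 < z - Q := by linarith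
      have : (1:ℝ)/(n+1) < z - Q := by
        rw [div_lt_iff₀ (by positivity)]
        rw [div_lt_iff₀ hpos] at hn
        nlinarith [Nat.cast_nonneg (α := ℝ) n]
      linarith [h n]
    · intro h n
      have hp : (0:ℝ) < 1/(n+1) := by positivity
      linarith
  have htend : Tendsto (fun n : ℕ => μ (Iic (Q + 1/(n+1)))) atTop (𝓝 (μ (Iic Q))) := by
    have := tendsto_measure_iInter_atTop (μ := μ)
      (fun n => (measurableSet_Iic).nullMeasurableSet) hmono ⟨0, measure_ne_top μ _⟩
    rwa [hInter] at this
  have htend2 : Tendsto (fun n : ℕ => cdfR μ (Q + 1/(n+1))) atTop (𝓝 (cdfR μ Q)) := by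
    have := (ENNReal.tendsto_toReal (measure_ne_top μ _)).comp htend
    simpa [cdfR, Function.comp_def] using this
  exact ge_of_tendsto htend2 (Eventually.of_forall key)

lemma cdfR_qreal_le (hatom : ∀ y : ℝ, μ {y} = 0) {x : ℝ} (hx0 : 0 < x) (hx1 : x < 1) :
    cdfR μ (qreal μ x) ≤ x := by
  set Q := qreal μ x with hQ
  have hne := qset_nonempty μ hx0
  have key : ∀ n : ℕ, cdfR μ (Q - 1/(n+1)) ≤ x := by
    intro n
    obtain ⟨y, hy, hy2⟩ := exists_lt_of_lt_csSup hne (show Q - 1/(n+1) < Q by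
      have : (0:ℝ) < 1/(n+1) := by positivity
      linarith)
    exact le_trans (cdfR_mono μ hy2.le) hy
  have hmono : Monotone (fun n : ℕ => Iic (Q - 1/(n+1))) := by
    intro a b hab
    apply Iic_subset_Iic.2
    have : (1:ℝ)/(b+1) ≤ 1/(a+1) := by
      apply one_div_le_one_div_of_le (by positivity)
      have : (a:ℝ) ≤ b := Nat.cast_le.2 hab
      linarith
    linarith
  have hUnion : (⋃ n : ℕ, Iic (Q - 1/(n+1))) = Iio Q := by
    ext z
    simp only [mem_iUnion, mem_Iic, mem_Iio]
    constructor
    · rintro ⟨n, hn⟩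
      have hp : (0:ℝ) < 1/(n+1) := by positivity
      linarith
    · intro h
      obtain ⟨n, hn⟩ := exists_nat_gt (1/(Q - z))
      have hpos : 0 < Q - z := by linarith
      refine ⟨n, ?_⟩
      have : (1:ℝ)/(n+1) < Q - z := by
        rw [div_lt_iff₀ (by positivity)]
        rw [div_lt_iff₀ hpos] at hn
        nlinarith [Nat.cast_nonneg (α := ℝ) n]
      linarith
  have htend : Tendsto (fun n : ℕ => μ (Iic (Q - 1/(n+1)))) atTop (𝓝 (μ (Iio Q))) := by
    have := tendsto_measure_iUnion_atTop (μ := μ) hmono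
    rwa [hUnion] at this
  have hIioIic : μ (Iio Q) = μ (Iic Q) := by
    rw [← Iio_union_right, measure_union (by simp) (measurableSet_singleton Q), hatom Q, add_zero]
  rw [hIioIic] at htend
  have htend2 : Tendsto (fun n : ℕ => cdfR μ (Q - 1/(n+1))) atTop (𝓝 (cdfR μ Q)) := by
    have := (ENNReal.tendsto_toReal (measure_ne_top μ _)).comp htend
    simpa [cdfR, Function.comp_def] using this
  exact le_of_tendsto htend2 (Eventually.of_forall key)

lemma qreal_mono {x x' : ℝ} (hx0 : 0 < x) (hx'1 : x' < 1) (h : x ≤ x') :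
    qreal μ x ≤ qreal μ x' :=
  csSup_le_csSup (qset_bddAbove μ hx'1) (qset_nonempty μ hx0)
    (fun y hy => le_trans hy h)

lemma quant_eq_qreal {x : ℝ} (hx0 : 0 < x) (hx1 : x < 1) :
    quant μ x = ((qreal μ x : ℝ) : EReal) := by
  rw [quant, if_neg hx0.ne', if_neg hx1.ne]
  have hset : {z : EReal | ∃ y : ℝ, z = (y : EReal) ∧ (μ (Set.Iic y)).toReal ≤ x}
      = (fun y : ℝ => (y : EReal)) '' {y : ℝ | cdfR μ y ≤ x} := by
    ext z
    simp only [mem_setOf_eq, mem_image, cdfR]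
    constructor
    · rintro ⟨y, rfl, hy⟩; exact ⟨y, hy, rfl⟩
    · rintro ⟨y, hy, rfl⟩; exact ⟨y, rfl, hy⟩
  rw [hset]
  apply le_antisymm
  · apply sSup_le
    rintro z ⟨y, hy, rfl⟩
    have h3 : y ≤ qreal μ x := le_csSup (qset_bddAbove μ hx1) hy
    exact EReal.coe_le_coe_iff.2 h3
  · obtain ⟨y₀, hy₀⟩ := qset_nonempty μ hx0
    set s := sSup ((fun y : ℝ => (y : EReal)) '' {y : ℝ | cdfR μ y ≤ x}) with hs
    have hbot : ((y₀ : ℝ) : EReal) ≤ s := le_sSup ⟨y₀, hy₀, rfl⟩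
    rcases eq_or_ne s ⊤ with htop | htop
    · rw [htop]; exact le_top
    have hsbot : s ≠ ⊥ := fun h => by rw [h] at hbot; exact absurd hbot (by simp)
    have hub : ∀ y ∈ {y : ℝ | cdfR μ y ≤ x}, y ≤ s.toReal := by
      intro y hy
      have : ((y:ℝ) : EReal) ≤ s := le_sSup ⟨y, hy, rfl⟩
      have := EReal.toReal_le_toReal this (by simp) htop
      simpa using this
    have : qreal μ x ≤ s.toReal := csSup_le (qset_nonempty μ hx0) hub
    calc ((qreal μ x : ℝ) : EReal) ≤ (s.toReal : EReal) := by exact_mod_cast this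
      _ = s := EReal.coe_toReal htop hsbot

end basic


/-- The dyadic bucket `B_{i,j} = (q_{(i-1)·2^{-j}}, q_{i·2^{-j}}]` determined by the quantile
function of `μ`. -/
noncomputable def bucket (μ : Measure ℝ) (i j : ℕ) : Set ℝ :=
  {y : ℝ | quant μ (((i : ℝ) - 1) * 2 ^ (-(j : ℤ))) < (y : EReal) ∧
    (y : EReal) ≤ quant μ ((i : ℝ) * 2 ^ (-(j : ℤ)))}

noncomputable def Hf (μ ν : Measure ℝ) (x : ℝ) : ℝ :=
  if x ≤ 0 then 0 else if 1 ≤ x then 1 else cdfR ν (qreal μ x)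

section bucketsec
variable (μ ν : Measure ℝ) [IsProbabilityMeasure μ] [IsProbabilityMeasure ν]

lemma quant_zero : quant μ 0 = ⊥ := by rw [quant, if_pos rfl]

lemma quant_one : quant μ 1 = ⊤ := by
  rw [quant, if_neg one_ne_zero, if_pos rfl]

lemma Hf_zero : Hf μ ν 0 = 0 := by rw [Hf, if_pos le_rfl]

lemma Hf_one : Hf μ ν 1 = 1 := by rw [Hf, if_neg (by norm_num), if_pos le_rfl]

lemma Hf_mid {x : ℝ} (h0 : 0 < x) (h1 : x < 1) : Hf μ ν x = cdfR ν (qreal μ x) := by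
  rw [Hf, if_neg (not_le.2 h0), if_neg (not_le.2 h1)]

lemma measure_Ioc_toReal {a b : ℝ} (hab : a ≤ b) :
    (ν (Set.Ioc a b)).toReal = cdfR ν b - cdfR ν a := by
  have hdisj : Disjoint (Iic a) (Ioc a b) := by
    rw [Set.disjoint_left]; intro z hz hz2; exact absurd hz2.1 (not_lt.2 hz)
  have hunion : Iic a ∪ Ioc a b = Iic b := Iic_union_Ioc_eq_Iic hab
  have := measure_union (μ := ν) hdisj measurableSet_Ioc
  rw [hunion] at this
  rw [cdfR, cdfR, this, ENNReal.toReal_add (measure_ne_top ν _) (measure_ne_top ν _)]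
  ring

lemma measure_Ioi_toReal (a : ℝ) : (ν (Set.Ioi a)).toReal = 1 - cdfR ν a := by
  have : Set.Ioi a = (Set.Iic a)ᶜ := by ext z; simp
  rw [this, measure_compl measurableSet_Iic (measure_ne_top ν _), measure_univ]
  rw [ENNReal.toReal_sub_of_le prob_le_one (by simp), ENNReal.toReal_one, cdfR]

lemma bucket_measure (hatom : ∀ y : ℝ, μ {y} = 0) {i j : ℕ} (hj : 1 ≤ j) (hi1 : 1 ≤ i)
    (hi2 : i ≤ 2 ^ j) :
    (ν (bucket μ i j)).toReal
      = Hf μ ν ((i : ℝ) * 2 ^ (-(j : ℤ))) - Hf μ ν (((i : ℝ) - 1) * 2 ^ (-(j : ℤ))) := by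
  have hpe : (2:ℝ) ^ (-(j:ℤ)) = ((2:ℝ)^j)⁻¹ := by
    rw [zpow_neg, zpow_natCast]
  have hp : (0:ℝ) < 2 ^ (-(j:ℤ)) := by rw [hpe]; positivity
  have h2j : (2:ℝ) ^ j = ((2^j : ℕ) : ℝ) := by push_cast; ring
  have hrle : (i : ℝ) * 2 ^ (-(j:ℤ)) ≤ 1 := by
    rw [hpe, mul_inv_le_iff₀ (by positivity), one_mul, h2j]
    exact_mod_cast hi2
  rcases eq_or_lt_of_le hi1 with h1 | h1
  · -- i = 1
    have hi : i = 1 := h1.symm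
    subst hi
    have hl : ((1 : ℝ) - 1) * 2 ^ (-(j:ℤ)) = 0 := by ring
    have hj2 : (1:ℕ) < 2 ^ j := by
      calc (1:ℕ) < 2 ^ 1 := by norm_num
        _ ≤ 2 ^ j := Nat.pow_le_pow_right (by norm_num) hj
    have hr1 : (1 : ℝ) * 2 ^ (-(j:ℤ)) < 1 := by
      rw [hpe, one_mul, inv_lt_one_iff₀]
      right
      rw [h2j]; exact_mod_cast hj2
    have hr0 : (0:ℝ) < (1 : ℝ) * 2 ^ (-(j:ℤ)) := by positivity
    have hset : bucket μ 1 j = Set.Iic (qreal μ ((1:ℝ) * 2 ^ (-(j:ℤ)))) := by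
      ext y
      simp only [bucket, Set.mem_setOf_eq, Set.mem_Iic, Nat.cast_one, hl, quant_zero,
        quant_eq_qreal μ hr0 hr1]
      constructor
      · rintro ⟨_, h⟩; exact_mod_cast h
      · intro h; exact ⟨bot_lt_iff_ne_bot.2 (by simp), EReal.coe_le_coe_iff.2 h⟩
    rw [hset, Nat.cast_one, hl, Hf_zero, Hf_mid μ ν hr0 hr1]
    simp [cdfR]
  · -- 1 < i
    have hl0 : (0:ℝ) < ((i : ℝ) - 1) * 2 ^ (-(j:ℤ)) := by
      have : (2:ℝ) ≤ (i:ℝ) := by exact_mod_cast h1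
      have h2 : (0:ℝ) < (i:ℝ) - 1 := by linarith
      positivity
    have hl1 : ((i : ℝ) - 1) * 2 ^ (-(j:ℤ)) < 1 := by
      apply lt_of_lt_of_le _ hrle
      have : ((i:ℝ) - 1) < (i:ℝ) := by linarith
      exact mul_lt_mul_of_pos_right this hp
    rcases eq_or_lt_of_le hi2 with h2 | h2
    · -- i = 2^j
      have hr : (i : ℝ) * 2 ^ (-(j:ℤ)) = 1 := by
        rw [hpe, h2, h2j, mul_inv_cancel₀ (by positivity)]
      have hset : bucket μ i j = Set.Ioi (qreal μ (((i:ℝ) - 1) * 2 ^ (-(j:ℤ)))) := by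
        ext y
        simp only [bucket, Set.mem_setOf_eq, Set.mem_Ioi, hr, quant_one,
          quant_eq_qreal μ hl0 hl1]
        constructor
        · rintro ⟨h, _⟩; exact_mod_cast h
        · intro h; exact ⟨EReal.coe_lt_coe_iff.2 h, le_top⟩
      rw [hset, hr, Hf_one, Hf_mid μ ν hl0 hl1, measure_Ioi_toReal]
    · -- i < 2^j
      have hr1 : (i : ℝ) * 2 ^ (-(j:ℤ)) < 1 := by
        rw [hpe, mul_inv_lt_iff₀ (by positivity), one_mul, h2j]
        exact_mod_cast h2
      have hr0 : (0:ℝ) < (i : ℝ) * 2 ^ (-(j:ℤ)) := by positivity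
      have hll : ((i : ℝ) - 1) * 2 ^ (-(j:ℤ)) ≤ (i : ℝ) * 2 ^ (-(j:ℤ)) := by
        apply mul_le_mul_of_nonneg_right (by linarith) hp.le
      have hqle : qreal μ (((i : ℝ) - 1) * 2 ^ (-(j:ℤ))) ≤ qreal μ ((i : ℝ) * 2 ^ (-(j:ℤ))) :=
        qreal_mono μ hl0 hr1 hll
      have hset : bucket μ i j
          = Set.Ioc (qreal μ (((i:ℝ) - 1) * 2 ^ (-(j:ℤ)))) (qreal μ ((i:ℝ) * 2 ^ (-(j:ℤ)))) := by
        ext y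
        simp only [bucket, Set.mem_setOf_eq, Set.mem_Ioc, quant_eq_qreal μ hl0 hl1,
          quant_eq_qreal μ hr0 hr1]
        constructor
        · rintro ⟨ha, hb⟩; exact ⟨by exact_mod_cast ha, by exact_mod_cast hb⟩
        · rintro ⟨ha, hb⟩; exact ⟨EReal.coe_lt_coe_iff.2 ha, EReal.coe_le_coe_iff.2 hb⟩
      rw [hset, measure_Ioc_toReal ν hqle, Hf_mid μ ν hl0 hl1, Hf_mid μ ν hr0 hr1]

lemma Hf_self (hatom : ∀ y : ℝ, μ {y} = 0) {x : ℝ} (h0 : 0 ≤ x) (h1 : x ≤ 1) :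
    Hf μ μ x = x := by
  rcases eq_or_lt_of_le h0 with h | h
  · rw [← h, Hf_zero]
  rcases eq_or_lt_of_le h1 with h' | h'
  · rw [h', Hf_one]
  rw [Hf_mid μ μ h h']
  exact le_antisymm (cdfR_qreal_le μ hatom h h') (le_cdfR_qreal μ h h')
end bucketsec

lemma sum_inv_sq (J : ℕ) : ∑ m ∈ Finset.range J, (1:ℝ)/((m:ℝ)+1)^2 ≤ 2 := by
  have key : ∀ n : ℕ, ∑ m ∈ Finset.range (n+1), (1:ℝ)/((m:ℝ)+1)^2 ≤ 2 - 1/((n:ℝ)+1) := by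
    intro n
    induction n with
    | zero => norm_num
    | succ n ih =>
      rw [Finset.sum_range_succ]
      have h1 : (1:ℝ)/((n:ℝ)+1+1)^2 ≤ 1/((n:ℝ)+1) - 1/((n:ℝ)+1+1) := by
        rw [div_sub_div _ _ (by positivity) (by positivity)]
        rw [div_le_div_iff₀ (by positivity) (by positivity)]
        ring_nf
        nlinarith [Nat.cast_nonneg (α := ℝ) n]
      push_cast
      linarith
  cases J with
  | zero => simp
  | succ n =>
    have := key n
    have h2 : (0:ℝ) < 1/((n:ℝ)+1) := by positivity
    linarith

lemma exists_good_k (D Dstar : Measure ℝ) [IsProbabilityMeasure D] [IsProbabilityMeasure Dstar]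
    (ε : ℝ) (hε0 : 0 < ε) (hε1 : ε < 1) (J : ℕ) (hpε : (2:ℝ)^(-(J:ℤ)) ≤ ε/4)
    (x₀ : ℝ) (hx₀ : 3*ε/4 < |cdfR D x₀ - cdfR Dstar x₀|) :
    ∃ k : ℕ, 1 ≤ k ∧ k < 2^J ∧
      ε/2 ≤ |Hf Dstar D ((k:ℝ) * 2^(-(J:ℤ))) - (k:ℝ) * 2^(-(J:ℤ))| := by
  set p : ℝ := 2^(-(J:ℤ)) with hpdef
  have hpe : p = ((2:ℝ)^J)⁻¹ := by rw [hpdef, zpow_neg, zpow_natCast]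
  have hp : (0:ℝ) < p := by rw [hpe]; positivity
  have hprod : (2:ℝ)^J * p = 1 := by rw [hpe]; field_simp
  set t := cdfR Dstar x₀ with htdef
  have ht0 : 0 ≤ t := cdfR_nonneg Dstar x₀
  have ht1 : t ≤ 1 := cdfR_le_one Dstar x₀
  have hF0 : 0 ≤ cdfR D x₀ := cdfR_nonneg D x₀
  have hF1 : cdfR D x₀ ≤ 1 := cdfR_le_one D x₀
  rcases le_or_gt (cdfR D x₀) t with hcase | hcase
  · -- t - cdfR D x₀ > 3ε/4
    have hd : 3*ε/4 < t - cdfR D x₀ := by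
      rw [abs_sub_comm, abs_of_nonneg (by linarith)] at hx₀; linarith
    have ht0' : 3*ε/4 < t := by linarith
    set c := ⌈t * 2^J⌉₊ with hcdef
    have hc1 : 1 ≤ c := Nat.one_le_cast.1 (le_trans (by nlinarith [hprod]) (Nat.le_ceil (t * 2^J)))
    set k := c - 1 with hkdef
    have hkc : (k:ℝ) = (c:ℝ) - 1 := by
      rw [hkdef, Nat.cast_sub hc1, Nat.cast_one]
    have hcub : (c:ℝ) < t * 2^J + 1 := Nat.ceil_lt_add_one (by positivity)
    have hclb : t * 2^J ≤ c := Nat.le_ceil _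
    have hkub : (k:ℝ) * p < t := by
      have : (k:ℝ) < t * 2^J := by rw [hkc]; linarith
      calc (k:ℝ) * p < t * 2^J * p := by exact mul_lt_mul_of_pos_right this hp
        _ = t := by rw [mul_assoc, hprod, mul_one]
    have hklb : t - p ≤ (k:ℝ) * p := by
      have h1 : t * 2^J - 1 ≤ (k:ℝ) := by rw [hkc]; linarith
      have := mul_le_mul_of_nonneg_right h1 hp.le
      calc t - p = (t * 2^J - 1) * p := by rw [sub_mul, mul_assoc, hprod, mul_one, one_mul]
        _ ≤ (k:ℝ) * p := this
    have hk1 : 1 ≤ k := by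
      have h4 : (4:ℝ)/ε ≤ (2:ℝ)^J := by
        rw [hpe] at hpε
        rw [div_le_iff₀ hε0] at *
        have h2Jpos : (0:ℝ) < (2:ℝ)^J := by positivity
        rw [inv_le_iff_one_le_mul₀ h2Jpos] at hpε
        nlinarith
      have : (1:ℝ) ≤ (k:ℝ) := by
        have h5 : 3*ε/4 * (4/ε) ≤ t * 2^J := by
          apply mul_le_mul ht0'.le h4 (by positivity) ht0
        have h6 : 3*ε/4 * (4/ε) = 3 := by field_simp
        rw [hkc]; linarith
      exact_mod_cast Nat.one_le_cast.1 (by exact_mod_cast this)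
    have hklt : k < 2^J := by
      have : (k:ℝ) * p < 1 := lt_of_lt_of_le hkub ht1
      have h2 : (k:ℝ) < (2:ℝ)^J := by
        rw [hpe] at this
        have h2Jpos : (0:ℝ) < (2:ℝ)^J := by positivity
        rw [mul_inv_lt_iff₀ h2Jpos, one_mul] at this
        exact this
      have h3 : (k:ℝ) < ((2^J : ℕ) : ℝ) := by push_cast; exact h2
      exact_mod_cast h3
    refine ⟨k, hk1, hklt, ?_⟩
    have hkp0 : 0 < (k:ℝ) * p := by
      have : (1:ℝ) ≤ (k:ℝ) := by exact_mod_cast hk1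
      nlinarith
    have hkp1 : (k:ℝ) * p < 1 := lt_of_lt_of_le hkub ht1
    rw [Hf_mid Dstar D hkp0 hkp1]
    have hqle : qreal Dstar ((k:ℝ)*p) ≤ x₀ := by
      apply csSup_le (qset_nonempty Dstar hkp0)
      intro y hy
      by_contra hcon
      push_neg at hcon
      have : t ≤ cdfR Dstar y := cdfR_mono Dstar hcon.le
      have : cdfR Dstar y ≤ (k:ℝ)*p := hy
      linarith
    have hHle : cdfR D (qreal Dstar ((k:ℝ)*p)) ≤ cdfR D x₀ := cdfR_mono D hqle
    have : cdfR D (qreal Dstar ((k:ℝ)*p)) - (k:ℝ)*p ≤ -(ε/2) := by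
      have hp4 : p ≤ ε/4 := hpε
      linarith
    rw [abs_sub_comm]
    rw [le_abs]
    left
    linarith
  · -- cdfR D x₀ - t > 3ε/4
    have hd : 3*ε/4 < cdfR D x₀ - t := by
      rw [abs_of_pos (by linarith)] at hx₀; linarith
    set k := max 1 ⌈t * 2^J⌉₊ with hkdef
    have hk1 : 1 ≤ k := le_max_left _ _
    have hkub : (k:ℝ) ≤ t * 2^J + 1 := by
      rw [hkdef]
      push_cast
      apply max_le
      · nlinarith [hprod]
      · exact (Nat.ceil_lt_add_one (by positivity)).le
    have hklb : t * 2^J ≤ (k:ℝ) := by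
      have h1 : t * 2^J ≤ (⌈t * 2^J⌉₊ : ℝ) := Nat.le_ceil _
      have h2 : (⌈t * 2^J⌉₊ : ℝ) ≤ (k:ℝ) := by
        have := le_max_right 1 ⌈t * 2^J⌉₊
        rw [hkdef]
        exact_mod_cast this
      linarith
    have hkple : (k:ℝ) * p ≤ t + p := by
      have := mul_le_mul_of_nonneg_right hkub hp.le
      calc (k:ℝ)*p ≤ (t * 2^J + 1) * p := this
        _ = t + p := by rw [add_mul, mul_assoc, hprod, mul_one, one_mul]
    have hkpge : t ≤ (k:ℝ) * p := by
      have := mul_le_mul_of_nonneg_right hklb hp.le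
      calc t = t * 2^J * p := by rw [mul_assoc, hprod, mul_one]
        _ ≤ (k:ℝ) * p := this
    have hkp1 : (k:ℝ) * p < 1 := by
      have : t ≤ 1 - (cdfR D x₀ - t) := by linarith
      have hp4 : p ≤ ε/4 := hpε
      linarith
    have hklt : k < 2^J := by
      have h2 : (k:ℝ) < (2:ℝ)^J := by
        rw [hpe] at hkp1
        have h2Jpos : (0:ℝ) < (2:ℝ)^J := by positivity
        rw [mul_inv_lt_iff₀ h2Jpos, one_mul] at hkp1
        exact hkp1
      have h3 : (k:ℝ) < ((2^J : ℕ) : ℝ) := by push_cast; exact h2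
      exact_mod_cast h3
    refine ⟨k, hk1, hklt, ?_⟩
    have hkp0 : 0 < (k:ℝ) * p := by
      have : (1:ℝ) ≤ (k:ℝ) := by exact_mod_cast hk1
      nlinarith
    rw [Hf_mid Dstar D hkp0 hkp1]
    have hqge : x₀ ≤ qreal Dstar ((k:ℝ)*p) := by
      apply le_csSup (qset_bddAbove Dstar hkp1)
      exact hkpge
    have hHge : cdfR D x₀ ≤ cdfR D (qreal Dstar ((k:ℝ)*p)) := cdfR_mono D hqge
    have : ε/2 ≤ cdfR D (qreal Dstar ((k:ℝ)*p)) - (k:ℝ)*p := by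
      have hp4 : p ≤ ε/4 := hpε
      linarith
    rw [le_abs]
    left
    linarith

lemma dyadic_step (k J m : ℕ) (hm : m < J) (hk : k < 2^J) :
    ((k / 2^(J-(m+1))) * 2^(J-(m+1)) = (k / 2^(J-m)) * 2^(J-m)) ∨
    ∃ i : ℕ, 1 ≤ i ∧ i ≤ 2^(m+1) ∧
      (((k / 2^(J-(m+1))) * 2^(J-(m+1)) : ℕ) : ℝ) * 2^(-(J:ℤ))
        = (i:ℝ) * 2^(-((m+1:ℕ):ℤ)) ∧
      (((k / 2^(J-m)) * 2^(J-m) : ℕ) : ℝ) * 2^(-(J:ℤ))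
        = ((i:ℝ) - 1) * 2^(-((m+1:ℕ):ℤ)) := by
  set e := J - (m+1) with hedef
  have heJ : J - m = e + 1 := by omega
  set a := k / 2^e with hadef
  have hdiv : k / 2^(e+1) = a / 2 := by
    rw [pow_succ, ← Nat.div_div_eq_div_mul]
  have hum : k / 2^(J-m) * 2^(J-m) = (a/2) * 2 * 2^e := by
    rw [heJ, hdiv, pow_succ]; ring
  rcases Nat.even_or_odd a with hpar | hpar
  · left
    rw [hum, Nat.div_mul_cancel hpar.two_dvd]
  · right
    have ha1 : 1 ≤ a := by
      rcases hpar with ⟨b, hb⟩; omega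
    have hmul : a / 2 * 2 = a - 1 := by
      obtain ⟨b, hb⟩ := hpar; omega
    have haub : a ≤ 2^(m+1) := by
      have hpos : 0 < 2^e := Nat.pow_pos (by norm_num)
      have : a < 2^(m+1) := by
        rw [hadef, Nat.div_lt_iff_lt_mul hpos]
        calc k < 2^J := hk
          _ = 2^(m+1) * 2^e := by rw [← pow_add]; congr 1; omega
      exact this.le
    have hfactor : (2:ℝ)^(e:ℕ) * 2^(-(J:ℤ)) = 2^(-((m:ℤ)+1)) := by
      have h1 : (2:ℝ)^(e:ℕ) = (2:ℝ)^((e:ℤ)) := by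
        rw [zpow_natCast]
      rw [h1, ← zpow_add₀ (by norm_num : (2:ℝ) ≠ 0)]
      congr 1
      have : (e:ℤ) = (J:ℤ) - ((m:ℤ)+1) := by
        rw [hedef]; push_cast [Nat.cast_sub (by omega : m+1 ≤ J)]; ring
      omega
    refine ⟨a, ha1, haub, ?_, ?_⟩
    · push_cast
      rw [mul_assoc, hfactor]
    · rw [hum, hmul]
      push_cast [Nat.cast_sub ha1]
      rw [mul_assoc, hfactor]


/-- The Kolmogorov distance between measures on `ℝ`. -/
noncomputable def kolDist (μ ν : Measure ℝ) : ℝ :=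
  ⨆ x : ℝ, |(μ (Set.Iic x)).toReal - (ν (Set.Iic x)).toReal|


set_option maxHeartbeats 2000000 in
/-- Main structural lemma: if two atomless probability measures are `ε`-far in Kolmogorov
distance, then some dyadic bucket `B_{i,j}` (with `j ∈ [⌈lg(1/ε)⌉+2]`, `i ∈ [2^j]`) of `D*`
witnesses a probability discrepancy of at least `max(ε/j², ε/(lg(1/ε)+3))/10`. -/
theorem exists_bucket_discrepancy (D Dstar : Measure ℝ) [IsProbabilityMeasure D]
    [IsProbabilityMeasure Dstar] (hD : ∀ y : ℝ, D {y} = 0) (hDstar : ∀ y : ℝ, Dstar {y} = 0)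
    (ε : ℝ) (hε0 : 0 < ε) (hε1 : ε < 1) (hfar : ε ≤ kolDist D Dstar) :
    ∃ j i : ℕ, 1 ≤ j ∧ j ≤ ⌈Real.logb 2 (1 / ε)⌉₊ + 2 ∧ 1 ≤ i ∧ i ≤ 2 ^ j ∧
      max (ε / (j : ℝ) ^ 2) (ε / (Real.logb 2 (1 / ε) + 3)) / 10 ≤
        |(Dstar (bucket Dstar i j)).toReal - (D (bucket Dstar i j)).toReal| := by
  by_contra hcon
  push_neg at hcon
  set L := Real.logb 2 (1/ε) with hLdef
  set J := ⌈L⌉₊ + 2 with hJdef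
  have hL0 : 0 ≤ L := Real.logb_nonneg (by norm_num) ((le_div_iff₀ hε0).2 (by linarith))
  have hL3 : (0:ℝ) < L + 3 := by linarith
  have hJle : (J:ℝ) ≤ L + 3 := by
    have := Nat.ceil_lt_add_one hL0
    rw [hJdef]; push_cast; linarith
  have h2J : (4:ℝ)/ε ≤ (2:ℝ)^J := by
    have h1 : (1:ℝ)/ε = (2:ℝ)^L := by
      rw [hLdef, Real.rpow_logb (by norm_num) (by norm_num) (by positivity)]
    have h2 : (2:ℝ)^L ≤ (2:ℝ)^((⌈L⌉₊:ℕ):ℝ) :=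
      Real.rpow_le_rpow_of_exponent_le (by norm_num) (Nat.le_ceil L)
    rw [Real.rpow_natCast] at h2
    have h3 : (2:ℝ)^J = (2:ℝ)^(⌈L⌉₊:ℕ) * 4 := by
      rw [hJdef, pow_add]; norm_num
    rw [h3]
    have : (1:ℝ)/ε ≤ (2:ℝ)^(⌈L⌉₊:ℕ) := by linarith
    rw [div_le_iff₀ hε0] at this ⊢
    linarith
  have hpε : (2:ℝ)^(-(J:ℤ)) ≤ ε/4 := by
    rw [zpow_neg, zpow_natCast, inv_le_comm₀ (by positivity) (by positivity), inv_div]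
    exact h2J
  -- extract a far point
  have hx : ∃ x₀ : ℝ, 3*ε/4 < |cdfR D x₀ - cdfR Dstar x₀| := by
    by_contra h
    push_neg at h
    have hk : kolDist D Dstar ≤ 3*ε/4 := ciSup_le (fun x => h x)
    linarith [le_trans hfar hk]
  obtain ⟨x₀, hx₀⟩ := hx
  obtain ⟨k, hk1, hklt, hkΔ⟩ := exists_good_k D Dstar ε hε0 hε1 J hpε x₀ hx₀
  -- telescoping
  set u : ℕ → ℕ := fun n => (k / 2^(J-n)) * 2^(J-n) with hudef
  set g : ℕ → ℝ := fun n => Hf Dstar D ((u n : ℝ) * 2^(-(J:ℤ))) - (u n : ℝ) * 2^(-(J:ℤ))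
    with hgdef
  have hg0 : g 0 = 0 := by
    have hu0 : u 0 = 0 := by
      rw [hudef]; simp only [Nat.sub_zero]
      rw [Nat.div_eq_of_lt hklt, zero_mul]
    rw [hgdef]; simp only [hu0, Nat.cast_zero, zero_mul]
    rw [Hf_zero]; ring
  have hgJ : g J = Hf Dstar D ((k:ℝ) * 2^(-(J:ℤ))) - (k:ℝ) * 2^(-(J:ℤ)) := by
    have huJ : u J = k := by
      rw [hudef]; simp
    simp only [hgdef, huJ]
  have hsum : ∑ m ∈ Finset.range J, (g (m+1) - g m) = g J := by
    rw [Finset.sum_range_sub g J, hg0, sub_zero]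
  have hterm : ∀ m ∈ Finset.range J,
      |g (m+1) - g m| ≤ max (ε / ((m:ℝ)+1)^2) (ε/(L+3)) / 10 := by
    intro m hm
    rw [Finset.mem_range] at hm
    have hbound_nonneg : 0 ≤ max (ε / ((m:ℝ)+1)^2) (ε/(L+3)) / 10 := by
      have : 0 ≤ ε / ((m:ℝ)+1)^2 := by positivity
      have h2 : 0 ≤ ε/(L+3) := by positivity
      have := le_max_left (ε / ((m:ℝ)+1)^2) (ε/(L+3))
      linarith
    rcases dyadic_step k J m hm hklt with heq | ⟨i, hi1, hi2, hr, hl⟩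
    · have : u (m+1) = u m := heq
      rw [hgdef]
      simp only [this, sub_self, abs_zero]
      exact hbound_nonneg
    · have hgdiff : g (m+1) - g m
          = ((Hf Dstar D ((i:ℝ) * 2^(-((m+1:ℕ):ℤ))) - Hf Dstar D (((i:ℝ)-1) * 2^(-((m+1:ℕ):ℤ))))
            - ((i:ℝ) * 2^(-((m+1:ℕ):ℤ)) - ((i:ℝ)-1) * 2^(-((m+1:ℕ):ℤ)))) := by
        rw [hgdef]
        simp only []
        rw [hr, hl]
        ring
      have hDval : Hf Dstar D ((i:ℝ) * 2^(-((m+1:ℕ):ℤ))) - Hf Dstar D (((i:ℝ)-1) * 2^(-((m+1:ℕ):ℤ)))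
          = (D (bucket Dstar i (m+1))).toReal :=
        (bucket_measure Dstar D hDstar (by omega) hi1 hi2).symm
      have hSval : (i:ℝ) * 2^(-((m+1:ℕ):ℤ)) - ((i:ℝ)-1) * 2^(-((m+1:ℕ):ℤ))
          = (Dstar (bucket Dstar i (m+1))).toReal := by
        have hpm : ((2:ℝ))^(-((m+1:ℕ):ℤ)) = ((2:ℝ)^(m+1))⁻¹ := by
          rw [zpow_neg, zpow_natCast]
        have hir : (i:ℝ) * 2^(-((m+1:ℕ):ℤ)) ≤ 1 := by
          rw [hpm, mul_inv_le_iff₀ (by positivity), one_mul]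
          calc (i:ℝ) ≤ ((2^(m+1) : ℕ):ℝ) := by exact_mod_cast hi2
            _ = (2:ℝ)^(m+1) := by push_cast; ring
        have hil : 0 ≤ ((i:ℝ)-1) * 2^(-((m+1:ℕ):ℤ)) := by
          have : (1:ℝ) ≤ (i:ℝ) := by exact_mod_cast hi1
          have hpm0 : (0:ℝ) < 2^(-((m+1:ℕ):ℤ)) := by rw [hpm]; positivity
          nlinarith
        have hil1 : ((i:ℝ)-1) * 2^(-((m+1:ℕ):ℤ)) ≤ 1 := by
          have hpm0 : (0:ℝ) < 2^(-((m+1:ℕ):ℤ)) := by rw [hpm]; positivity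
          have : ((i:ℝ)-1) * 2^(-((m+1:ℕ):ℤ)) ≤ (i:ℝ) * 2^(-((m+1:ℕ):ℤ)) := by nlinarith
          linarith
        have hir0 : 0 ≤ (i:ℝ) * 2^(-((m+1:ℕ):ℤ)) := by
          have hpm0 : (0:ℝ) < 2^(-((m+1:ℕ):ℤ)) := by rw [hpm]; positivity
          positivity
        rw [bucket_measure Dstar Dstar hDstar (by omega : 1 ≤ m+1) hi1 hi2,
          Hf_self Dstar hDstar hir0 hir, Hf_self Dstar hDstar hil hil1]
      rw [hgdiff, hDval, hSval]
      have := hcon (m+1) i (by omega) hm hi1 hi2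
      rw [abs_sub_comm]
      have hcast : ((m+1:ℕ):ℝ) = (m:ℝ)+1 := by push_cast; ring
      rw [hcast] at this
      exact this.le
  -- final contradiction
  have habs : ε/2 ≤ |∑ m ∈ Finset.range J, (g (m+1) - g m)| := by
    rw [hsum, hgJ]; exact hkΔ
  have hub : |∑ m ∈ Finset.range J, (g (m+1) - g m)| ≤ 3*ε/10 := by
    calc |∑ m ∈ Finset.range J, (g (m+1) - g m)|
        ≤ ∑ m ∈ Finset.range J, |g (m+1) - g m| := Finset.abs_sum_le_sum_abs _ _
      _ ≤ ∑ m ∈ Finset.range J, (max (ε / ((m:ℝ)+1)^2) (ε/(L+3)) / 10) :=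
          Finset.sum_le_sum hterm
      _ ≤ ∑ m ∈ Finset.range J, (ε/10 * (1/((m:ℝ)+1)^2) + ε/(L+3)/10) := by
          apply Finset.sum_le_sum
          intro m _
          have h1 : max (ε / ((m:ℝ)+1)^2) (ε/(L+3)) ≤ ε / ((m:ℝ)+1)^2 + ε/(L+3) := by
            apply max_le
            · have : 0 ≤ ε/(L+3) := by positivity
              linarith
            · have : 0 ≤ ε / ((m:ℝ)+1)^2 := by positivity
              linarith
          have h2 : ε / ((m:ℝ)+1)^2 = ε/10 * (1/((m:ℝ)+1)^2) * 10 := by ring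
          linarith
      _ = ε/10 * (∑ m ∈ Finset.range J, (1:ℝ)/((m:ℝ)+1)^2) + (J:ℝ) * (ε/(L+3)/10) := by
          rw [Finset.sum_add_distrib, Finset.mul_sum, Finset.sum_const, Finset.card_range,
            nsmul_eq_mul]
      _ ≤ ε/10 * 2 + (L+3) * (ε/(L+3)/10) := by
          have h1 : ε/10 * (∑ m ∈ Finset.range J, (1:ℝ)/((m:ℝ)+1)^2) ≤ ε/10 * 2 :=
            mul_le_mul_of_nonneg_left (sum_inv_sq J) (by positivity)
          have h2 : (J:ℝ) * (ε/(L+3)/10) ≤ (L+3) * (ε/(L+3)/10) :=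
            mul_le_mul_of_nonneg_right hJle (by positivity)
          linarith
      _ = ε/10 * 2 + ε/10 := by
          congr 1
          field_simp
      _ = 3*ε/10 := by ring
  linarith
end

section
/- For every ε ∈ (0, 1/2) and every sufficiently large constant c, the total number of samples used per level, namely ⌈2^j / (lg(1/ε))³⌉ · c · min(1/ε², (lg(1/ε)+3)³/(2^j ε²)), is O(1/ε²) uniformly over j ∈ [⌈lg(1/ε)⌉ + 2]. -/
/-- The total number of samples used at each level `j`, namely
`⌈2^j/(lg(1/ε))³⌉ · c · min(1/ε², (lg(1/ε)+3)³/(2^j ε²))`, is `O(1/ε²)` uniformly over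
`ε ∈ (0,1/2)` and `j ∈ [⌈lg(1/ε)⌉+2]`. -/
theorem samples_per_level_bound :
    ∃ C : ℝ, 0 < C ∧ ∀ c : ℝ, 1 ≤ c → ∀ ε : ℝ, 0 < ε → ε < 1 / 2 →
      ∀ j : ℕ, 1 ≤ j → j ≤ ⌈Real.logb 2 (1 / ε)⌉₊ + 2 →
        (⌈(2 : ℝ) ^ j / (Real.logb 2 (1 / ε)) ^ 3⌉₊ : ℝ) *
            (c * min (1 / ε ^ 2) ((Real.logb 2 (1 / ε) + 3) ^ 3 / (2 ^ j * ε ^ 2))) ≤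
          C * c * (1 / ε ^ 2) := by
  refine ⟨128, by norm_num, ?_⟩
  intro c hc ε hε hε2 j hj1 hj2
  set L := Real.logb 2 (1 / ε) with hLdef
  have h2ε : 2 < 1 / ε := by rw [lt_div_iff₀ hε]; linarith
  have hL : 1 < L := by
    have h := Real.logb_lt_logb (by norm_num : (1:ℝ) < 2) (by norm_num : (0:ℝ) < 2) h2ε
    rwa [Real.logb_self_eq_one (by norm_num)] at h
  have hL3 : (1:ℝ) < L ^ 3 := one_lt_pow₀ hL (by norm_num)
  have hL3pos : (0:ℝ) < L ^ 3 := by linarith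
  have h2j : (0:ℝ) < 2 ^ j := by positivity
  have hε2pos : (0:ℝ) < ε ^ 2 := by positivity
  set m := min (1 / ε ^ 2) ((L + 3) ^ 3 / (2 ^ j * ε ^ 2)) with hm
  have hmnn : 0 ≤ m := le_min (by positivity) (by positivity)
  by_cases hcase : (2:ℝ) ^ j ≤ L ^ 3
  · have hceil : (⌈(2:ℝ) ^ j / L ^ 3⌉₊ : ℝ) ≤ 1 := by
      have : ⌈(2:ℝ) ^ j / L ^ 3⌉₊ ≤ 1 :=
        Nat.ceil_le.mpr (by rw [Nat.cast_one, div_le_one hL3pos]; exact_mod_cast hcase)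
      exact_mod_cast this
    have hmin : m ≤ 1 / ε ^ 2 := min_le_left _ _
    have h1 : (⌈(2:ℝ) ^ j / L ^ 3⌉₊ : ℝ) * (c * m) ≤ 1 * (c * (1 / ε ^ 2)) :=
      mul_le_mul hceil (mul_le_mul_of_nonneg_left hmin (by linarith))
        (by positivity) (by norm_num)
    have hcpos : (0:ℝ) < c := by linarith
    have : 1 * (c * (1 / ε ^ 2)) ≤ 128 * c * (1 / ε ^ 2) := by
      have : (0:ℝ) ≤ c * (1 / ε ^ 2) := by positivity
      nlinarith
    linarith
  · push_neg at hcase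
    have hx0 : (0:ℝ) ≤ 2 ^ j / L ^ 3 := by positivity
    have hx1 : (1:ℝ) ≤ 2 ^ j / L ^ 3 := (one_le_div hL3pos).mpr hcase.le
    have hceil : (⌈(2:ℝ) ^ j / L ^ 3⌉₊ : ℝ) ≤ 2 * (2 ^ j / L ^ 3) := by
      have := Nat.ceil_lt_add_one hx0
      linarith
    have hmin : m ≤ (L + 3) ^ 3 / (2 ^ j * ε ^ 2) := min_le_right _ _
    have h1 : (⌈(2:ℝ) ^ j / L ^ 3⌉₊ : ℝ) * (c * m) ≤
        2 * (2 ^ j / L ^ 3) * (c * ((L + 3) ^ 3 / (2 ^ j * ε ^ 2))) :=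
      mul_le_mul hceil (mul_le_mul_of_nonneg_left hmin (by linarith))
        (by positivity) (by positivity)
    have heq : 2 * ((2:ℝ) ^ j / L ^ 3) * (c * ((L + 3) ^ 3 / (2 ^ j * ε ^ 2))) =
        2 * c * (L + 3) ^ 3 / (L ^ 3 * ε ^ 2) := by
      field_simp
    have hL4 : (L + 3) ^ 3 ≤ 64 * L ^ 3 := by nlinarith [sq_nonneg (L - 1), sq_nonneg L]
    have h2 : 2 * c * (L + 3) ^ 3 / (L ^ 3 * ε ^ 2) ≤ 128 * c * (1 / ε ^ 2) := by
      rw [div_le_iff₀ (by positivity)]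
      have hcpos : (0:ℝ) < c := by linarith
      have : 2 * c * (L + 3) ^ 3 ≤ 128 * c * L ^ 3 := by nlinarith
      calc 2 * c * (L + 3) ^ 3 ≤ 128 * c * L ^ 3 := this
        _ = 128 * c * (1 / ε ^ 2) * (L ^ 3 * ε ^ 2) := by field_simp
    linarith [heq ▸ h1]
end
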